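/- arXiv:1409.6828 — 2 statements merged into one kernel-verified Lean document; each statement's English description precedes it below -/
import Mathlib

section
/- (Non-trivial meeting count bound, from the proof of Theorem 1) Consider any finite execution Q(0), Q(1), …, Q(T) of the quantized consensus algorithm on a simple graph G on N vertices, where each Q(t+1) is obtained from Q(t) by applying the quantized consensus update to some edge of G. Let m = min_i Q_i(0) and M = max_i Q_i(0). Then the number of steps t at which a non-trivial meeting occurs (i.e., the chosen edge {i,j} satisfies |Q_i(t) − Q_j(t)| ≥ 2) is at most (M − m)² N / 8. -/
/-- The quantized consensus update on the edge `{i,j}`: if `|Q i − Q j| ≥ 2`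
(a non-trivial meeting), the smaller value increases by 1 and the larger decreases
by 1; if `|Q i − Q j| ≤ 1` (a trivial meeting), the two values are swapped; all
other coordinates are unchanged. -/
def qcUpdate {N : ℕ} (Q Q' : Fin N → ℤ) (i j : Fin N) : Prop :=
  (∀ k, k ≠ i → k ≠ j → Q' k = Q k) ∧
  ((2 ≤ |Q i - Q j| ∧
      ((Q i ≤ Q j ∧ Q' i = Q i + 1 ∧ Q' j = Q j - 1) ∨
       (Q j ≤ Q i ∧ Q' j = Q j + 1 ∧ Q' i = Q i - 1))) ∨
   (|Q i - Q j| ≤ 1 ∧ Q' i = Q j ∧ Q' j = Q i))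

private lemma sum_diff_pair {N : ℕ} (i j : Fin N) (hij : i ≠ j)
    (f g : Fin N → ℤ) (h : ∀ k, k ≠ i → k ≠ j → g k = f k) :
    (∑ k, g k) - (∑ k, f k) = (g i - f i) + (g j - f j) := by
  have : (∑ k, (g k - f k)) = ∑ k ∈ ({i, j} : Finset (Fin N)), (g k - f k) := by
    refine (Finset.sum_subset (Finset.subset_univ _) ?_).symm
    intro k _ hk
    simp only [Finset.mem_insert, Finset.mem_singleton, not_or] at hk
    rw [h k hk.1 hk.2, sub_self]
  rw [← Finset.sum_sub_distrib, this, Finset.sum_pair hij]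

/-- Non-trivial meeting count bound: for any finite execution
`Q 0, Q 1, …, Q T` of the quantized consensus algorithm on a simple graph `G` on `N`
vertices, where at each step `t < T` the update is applied to the edge `e t` of `G`,
the number of steps at which a non-trivial meeting occurs (`|Q t i − Q t j| ≥ 2` for
the chosen edge `{i,j} = e t`) is at most `(M − m)² N / 8`, where `m = min_i Q 0 i`
and `M = max_i Q 0 i`. -/
theorem nontrivial_meeting_count_le {N : ℕ} (hN : 1 ≤ N)
    (G : SimpleGraph (Fin N)) (T : ℕ) (Q : ℕ → Fin N → ℤ) (e : ℕ → Fin N × Fin N)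
    (hadj : ∀ t < T, G.Adj (e t).1 (e t).2)
    (hupd : ∀ t < T, qcUpdate (Q t) (Q (t + 1)) (e t).1 (e t).2) :
    ((((Finset.range T).filter
        (fun t => 2 ≤ |Q t (e t).1 - Q t (e t).2|)).card : ℝ))
      ≤ ((Finset.univ.sup' ⟨⟨0, hN⟩, Finset.mem_univ _⟩ (Q 0)
            - Finset.univ.inf' ⟨⟨0, hN⟩, Finset.mem_univ _⟩ (Q 0) : ℤ) : ℝ) ^ 2
          * N / 8 := by
  set M : ℤ := Finset.univ.sup' ⟨⟨0, hN⟩, Finset.mem_univ _⟩ (Q 0) with hM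
  set m : ℤ := Finset.univ.inf' ⟨⟨0, hN⟩, Finset.mem_univ _⟩ (Q 0) with hm
  set c : ℤ := m + M with hc
  set W : ℕ → ℤ := fun t => ∑ i, (2 * Q t i - c) ^ 2 with hW
  -- per-step lemma
  have step : ∀ t < T, W (t + 1) ≤ W t ∧
      (2 ≤ |Q t (e t).1 - Q t (e t).2| → W (t + 1) + 8 ≤ W t) := by
    intro t ht
    obtain ⟨hoff, hcase⟩ := hupd t ht
    have hij : (e t).1 ≠ (e t).2 := (hadj t ht).ne
    have hdiff : W (t + 1) - W t =
        ((2 * Q (t+1) (e t).1 - c)^2 - (2 * Q t (e t).1 - c)^2) +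
        ((2 * Q (t+1) (e t).2 - c)^2 - (2 * Q t (e t).2 - c)^2) := by
      apply sum_diff_pair _ _ hij
      intro k h1 h2
      rw [hoff k h1 h2]
    rcases hcase with ⟨habs, hcs⟩ | ⟨habs, h1, h2⟩
    · have hstrong : W (t + 1) + 8 ≤ W t := by
        rcases hcs with ⟨hle, h1, h2⟩ | ⟨hle, h1, h2⟩
        · have hba : 2 ≤ Q t (e t).2 - Q t (e t).1 := by
            rw [abs_of_nonpos (by linarith)] at habs; linarith
          rw [h1, h2] at hdiff
          nlinarith [hdiff, hba]
        · have hba : 2 ≤ Q t (e t).1 - Q t (e t).2 := by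
            rw [abs_of_nonneg (by linarith)] at habs; linarith
          rw [h1, h2] at hdiff
          nlinarith [hdiff, hba]
      exact ⟨by linarith, fun _ => hstrong⟩
    · have : W (t + 1) = W t := by rw [h1, h2] at hdiff; linarith
      constructor
      · exact this.le
      · intro h; exfalso; linarith
  -- telescoping
  have tele : ∀ s ≤ T, 8 * (((Finset.range s).filter
      (fun t => 2 ≤ |Q t (e t).1 - Q t (e t).2|)).card : ℤ) + W s ≤ W 0 := by
    intro s hs
    induction s with
    | zero => simp
    | succ n ih =>
      have hn : n < T := hs
      have ihn := ih (Nat.le_of_succ_le hs)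
      rw [Finset.range_add_one]
      by_cases hnt : 2 ≤ |Q n (e n).1 - Q n (e n).2|
      · rw [Finset.filter_insert, if_pos hnt,
          Finset.card_insert_of_notMem (by simp)]
        have := (step n hn).2 hnt
        push_cast
        linarith
      · rw [Finset.filter_insert, if_neg hnt]
        have := (step n hn).1
        linarith
  have hWT : 0 ≤ W T := Finset.sum_nonneg fun i _ => sq_nonneg _
  -- initial bound
  have hW0 : W 0 ≤ N * (M - m) ^ 2 := by
    have : W 0 ≤ ∑ _i : Fin N, (M - m) ^ 2 := by
      apply Finset.sum_le_sum
      intro i _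
      have h1 : m ≤ Q 0 i := Finset.inf'_le _ (Finset.mem_univ i)
      have h2 : Q 0 i ≤ M := Finset.le_sup' _ (Finset.mem_univ i)
      apply sq_le_sq' <;> [linarith; linarith]
    simpa using this
  have key : 8 * (((Finset.range T).filter
      (fun t => 2 ≤ |Q t (e t).1 - Q t (e t).2|)).card : ℤ) ≤ (M - m) ^ 2 * N := by
    have := tele T le_rfl
    nlinarith
  rw [le_div_iff₀ (by norm_num : (0:ℝ) < 8)]
  have : (8 * (((Finset.range T).filter
      (fun t => 2 ≤ |Q t (e t).1 - Q t (e t).2|)).card : ℤ) : ℝ) ≤ ((M - m) ^ 2 * N : ℤ) := by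
    exact_mod_cast key
  push_cast at this ⊢
  linarith
end

section
/- (Meeting time on the complete graph) Let G be the complete graph on N ≥ 2 vertices, with biased random walk matrix P^B (so P^B_{xy} = 2/(N(N−1)) for every pair of distinct vertices x, y). Then the function m defined by m(x,y) = N(N−1)/2 for x ≠ y and m(x,x) = 0 is a meeting-time solution for the paired process X; hence the meeting time of the paired process on the complete graph equals N(N−1)/2. -/
/-- The biased random walk transition matrix `P^B` of a graph `G` on `Fin N`:
`P^B i j = (1/N)(1/deg i + 1/deg j)` for edges, `P^B i i = 1 - 1/N - ∑_{k ∈ N_i} 1/(N deg k)`,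
and `0` otherwise. -/
noncomputable def PB {N : ℕ} (G : SimpleGraph (Fin N)) [DecidableRel G.Adj]
    (i j : Fin N) : ℝ :=
  if i = j then
    1 - 1 / (N : ℝ) - ∑ k ∈ G.neighborFinset i, 1 / ((N : ℝ) * (G.degree k : ℝ))
  else if G.Adj i j then
    (1 / (N : ℝ)) * (1 / (G.degree i : ℝ) + 1 / (G.degree j : ℝ))
  else 0

/-- Meeting time on the complete graph: on the complete graph on
`N ≥ 2` vertices (any two distinct vertices adjacent), the biased random walk matrix
satisfies `P^B x y = 2/(N(N−1))` for all `x ≠ y`, and the function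
`m x y = N(N−1)/2` for `x ≠ y`, `m x x = 0` is a meeting-time solution for the paired
process `X`; hence the meeting time of the paired process on the complete graph
equals `N(N−1)/2`. -/
theorem complete_graph_meeting_time {N : ℕ} (hN : 2 ≤ N)
    (G : SimpleGraph (Fin N)) [DecidableRel G.Adj]
    (hG : ∀ x y, G.Adj x y ↔ x ≠ y)
    (m : Fin N → Fin N → ℝ)
    (hmdef : ∀ x y, m x y = if x = y then 0 else (N : ℝ) * ((N : ℝ) - 1) / 2) :
    (∀ x y, x ≠ y → PB G x y = 2 / ((N : ℝ) * ((N : ℝ) - 1))) ∧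
    (∀ x y, m x y = m y x) ∧ (∀ x, m x x = 0) ∧
    (∀ x y, x ≠ y →
      ((∑ i ∈ G.neighborFinset x, PB G x i) + (∑ j ∈ G.neighborFinset y, PB G y j)
          - PB G x y) * m x y
        = 1 + (∑ i ∈ (G.neighborFinset x).erase y, PB G x i * m i y)
            + (∑ j ∈ (G.neighborFinset y).erase x, PB G y j * m x j)) := by
  have hNR : (2:ℝ) ≤ (N:ℝ) := by exact_mod_cast hN
  have hN0 : (N:ℝ) ≠ 0 := by linarith
  have hN1 : (N:ℝ) - 1 ≠ 0 := by linarith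
  have hnbr : ∀ x : Fin N, G.neighborFinset x = Finset.univ.erase x := by
    intro x
    ext i
    simp [SimpleGraph.mem_neighborFinset, hG, ne_comm]
  have hdeg : ∀ k : Fin N, (G.degree k : ℝ) = (N:ℝ) - 1 := by
    intro k
    rw [← SimpleGraph.card_neighborFinset_eq_degree, hnbr,
      Finset.card_erase_of_mem (Finset.mem_univ k)]
    simp
    push_cast [Nat.cast_sub (le_trans one_le_two hN)]
    ring
  set c : ℝ := 2 / ((N : ℝ) * ((N : ℝ) - 1)) with hc
  set C : ℝ := (N : ℝ) * ((N : ℝ) - 1) / 2 with hC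
  have hPB : ∀ x y : Fin N, x ≠ y → PB G x y = c := by
    intro x y hxy
    rw [PB, if_neg hxy, if_pos ((hG x y).2 hxy), hdeg, hdeg, hc]
    field_simp
    ring
  refine ⟨hPB, ?_, ?_, ?_⟩
  · intro x y; rw [hmdef, hmdef]; by_cases h : x = y <;> simp [h, eq_comm]
  · intro x; simp [hmdef]
  · intro x y hxy
    have hmxy : m x y = C := by rw [hmdef, if_neg hxy]
    have hsum : ∀ z : Fin N, ∑ i ∈ G.neighborFinset z, PB G z i = ((N:ℝ) - 1) * c := by
      intro z
      rw [Finset.sum_congr rfl (fun i hi => hPB z i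
        (SimpleGraph.ne_of_adj G ((SimpleGraph.mem_neighborFinset G z i).1 hi))),
        Finset.sum_const, hnbr, Finset.card_erase_of_mem (Finset.mem_univ z), nsmul_eq_mul]
      simp only [Finset.card_univ, Fintype.card_fin]
      rw [Nat.cast_sub (le_trans one_le_two hN)]
      push_cast; ring
    have hcard2 : (((Finset.univ.erase x).erase y).card : ℝ) = (N:ℝ) - 2 := by
      rw [Finset.card_erase_of_mem (Finset.mem_erase.2 ⟨hxy.symm, Finset.mem_univ y⟩),
        Finset.card_erase_of_mem (Finset.mem_univ x)]
      simp only [Finset.card_univ, Fintype.card_fin]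
      have h2 : N - 1 - 1 = N - 2 := by omega
      rw [h2, Nat.cast_sub hN]
      push_cast; ring
    have hsum1 : ∑ i ∈ (G.neighborFinset x).erase y, PB G x i * m i y
        = ((N:ℝ) - 2) * (c * C) := by
      rw [hnbr, Finset.sum_congr rfl (fun i hi => ?_), Finset.sum_const, nsmul_eq_mul, hcard2]
      have hiy : i ≠ y := (Finset.mem_erase.1 hi).1
      have hix : i ≠ x := (Finset.mem_erase.1 ((Finset.mem_erase.1 hi).2)).1
      rw [hPB x i (Ne.symm hix), hmdef, if_neg hiy, hC]
    have hsum2 : ∑ j ∈ (G.neighborFinset y).erase x, PB G y j * m x j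
        = ((N:ℝ) - 2) * (c * C) := by
      have : ((Finset.univ.erase y).erase x).card = ((Finset.univ.erase x).erase y).card := by
        rw [Finset.erase_right_comm]
      rw [hnbr, Finset.sum_congr rfl (fun j hj => ?_), Finset.sum_const, nsmul_eq_mul, this,
        hcard2]
      have hjx : j ≠ x := (Finset.mem_erase.1 hj).1
      have hjy : j ≠ y := (Finset.mem_erase.1 ((Finset.mem_erase.1 hj).2)).1
      rw [hPB y j (Ne.symm hjy), hmdef, if_neg (Ne.symm hjx), hC]
    rw [hsum, hsum, hsum1, hsum2, hmxy, hPB x y hxy, hc, hC]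
    field_simp
    ring
end
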